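/- (Asymptotics of the multi-sensor loss, Section IV-B) For θ ∈ (0,1/2) set θ̂ = θ/(1-θ) and, for odd K = 2n+1, define L^K_∞(θ) = ∑_{i=n+1}^{K} C(K,i) θ^i (1-θ)^{K-i} - (1/2) ∑_{i=n+1}^{K} C(K,i) θ̂^i (1-θ̂)^{K-i}. Then, as K → ∞ through odd values, L^K_∞(θ) converges to 0 if θ < 1/3 and converges to -1/2 if 1/3 < θ < 1/2. -/

import Mathlib

open Finset Filter

lemma tail_le_geom (p : ℝ) (hp0 : 0 < p) (hp : p < 1/2) (n : ℕ) :
    ∑ i ∈ Icc (n+1) (2*n+1), ((2*n+1).choose i : ℝ) * p^i * (1-p)^(2*n+1-i)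
      ≤ 2*p*(4*p*(1-p))^n := by
  have hple : p ≤ 1 - p := by linarith
  have h1p : (0:ℝ) ≤ 1 - p := by linarith
  calc ∑ i ∈ Icc (n+1) (2*n+1), ((2*n+1).choose i : ℝ) * p^i * (1-p)^(2*n+1-i)
      ≤ ∑ i ∈ Icc (n+1) (2*n+1), ((2*n+1).choose i : ℝ) * (p^(n+1) * (1-p)^n) := by
        apply Finset.sum_le_sum
        intro i hi
        simp only [mem_Icc] at hi
        obtain ⟨h1, h2⟩ := hi
        set k := i - (n+1) with hkdef
        have hk : i = (n+1) + k := by omega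
        have hkn : k ≤ n := by omega
        have h2ni : 2*n+1-i = n - k := by omega
        rw [mul_assoc]
        apply mul_le_mul_of_nonneg_left _ (by positivity)
        have e : p ^ i * (1-p)^(2*n+1-i) = p^(n+1) * (p^k * (1-p)^(n-k)) := by
          rw [h2ni]
          conv_lhs => rw [hk]
          rw [pow_add]; ring
        rw [e]
        apply mul_le_mul_of_nonneg_left _ (pow_nonneg hp0.le _)
        calc p^k * (1-p)^(n-k) ≤ (1-p)^k * (1-p)^(n-k) :=
              mul_le_mul_of_nonneg_right (pow_le_pow_left₀ hp0.le hple k)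
                (pow_nonneg h1p _)
          _ = (1-p)^n := by rw [← pow_add]; congr 1; omega
    _ = (∑ i ∈ Icc (n+1) (2*n+1), ((2*n+1).choose i : ℝ)) * (p^(n+1) * (1-p)^n) := by
        rw [← Finset.sum_mul]
    _ ≤ (2^(2*n+1) : ℝ) * (p^(n+1) * (1-p)^n) := by
        apply mul_le_mul_of_nonneg_right _ (by positivity)
        have hsub : ∑ i ∈ Icc (n+1) (2*n+1), ((2*n+1).choose i : ℝ)
            ≤ ∑ i ∈ range (2*n+2), ((2*n+1).choose i : ℝ) := by
          apply Finset.sum_le_sum_of_subset_of_nonneg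
          · intro x hx
            simp only [mem_Icc, mem_range] at *
            omega
          · intros; positivity
        have hfull : ∑ i ∈ range (2*n+2), ((2*n+1).choose i : ℝ) = 2^(2*n+1) := by
          have h : ∑ i ∈ range (2*n+2), (2*n+1).choose i = 2^(2*n+1) :=
            Nat.sum_range_choose (2*n+1)
          exact_mod_cast h
        linarith
    _ = 2*p*(4*p*(1-p))^n := by
        have h4 : (2:ℝ)^(2*n+1) = 2 * 4^n := by
          rw [pow_succ, pow_mul]; norm_num; ring
        rw [h4, mul_pow, mul_pow]; ring

lemma tail_tendsto_zero (p : ℝ) (hp0 : 0 < p) (hp : p < 1/2) :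
    Tendsto (fun n : ℕ => ∑ i ∈ Icc (n+1) (2*n+1),
      ((2*n+1).choose i : ℝ) * p^i * (1-p)^(2*n+1-i)) atTop (nhds 0) := by
  have h1p : (0:ℝ) ≤ 1 - p := by linarith
  have hr0 : (0:ℝ) ≤ 4*p*(1-p) := by positivity
  have hr1 : 4*p*(1-p) < 1 := by nlinarith [sq_nonneg (1 - 2*p)]
  have hg : Tendsto (fun n : ℕ => 2*p*(4*p*(1-p))^n) atTop (nhds 0) := by
    have := (tendsto_pow_atTop_nhds_zero_of_lt_one hr0 hr1).const_mul (2*p)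
    simpa using this
  apply squeeze_zero _ (tail_le_geom p hp0 hp) hg
  intro n
  apply Finset.sum_nonneg
  intro i hi
  simp only [mem_Icc] at hi
  positivity

lemma tail_tendsto_one (p : ℝ) (hp : 1/2 < p) (hp1 : p < 1) :
    Tendsto (fun n : ℕ => ∑ i ∈ Icc (n+1) (2*n+1),
      ((2*n+1).choose i : ℝ) * p^i * (1-p)^(2*n+1-i)) atTop (nhds 1) := by
  have hq0 : (0:ℝ) < 1 - p := by linarith
  have hq : 1 - p < 1/2 := by linarith
  have key : ∀ n : ℕ, ∑ i ∈ Icc (n+1) (2*n+1),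
      ((2*n+1).choose i : ℝ) * p^i * (1-p)^(2*n+1-i)
      = 1 - ∑ i ∈ Icc (n+1) (2*n+1),
      ((2*n+1).choose i : ℝ) * (1-p)^i * (1-(1-p))^(2*n+1-i) := by
    intro n
    have hfull : ∑ i ∈ range (2*n+2),
        ((2*n+1).choose i : ℝ) * p^i * (1-p)^(2*n+1-i) = 1 := by
      calc ∑ i ∈ range (2*n+2), ((2*n+1).choose i : ℝ) * p^i * (1-p)^(2*n+1-i)
          = ∑ i ∈ range (2*n+2), p^i * (1-p)^(2*n+1-i) * ((2*n+1).choose i : ℝ) := by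
            apply Finset.sum_congr rfl; intros; ring
        _ = (p + (1-p))^(2*n+1) := (add_pow p (1-p) (2*n+1)).symm
        _ = 1 := by norm_num
    have hsplit : (∑ i ∈ range (n+1),
          ((2*n+1).choose i : ℝ) * p^i * (1-p)^(2*n+1-i))
        + ∑ i ∈ Icc (n+1) (2*n+1),
          ((2*n+1).choose i : ℝ) * p^i * (1-p)^(2*n+1-i) = 1 := by
      have heq : (∑ i ∈ range (n+1),
            ((2*n+1).choose i : ℝ) * p^i * (1-p)^(2*n+1-i))
          + ∑ i ∈ Icc (n+1) (2*n+1),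
            ((2*n+1).choose i : ℝ) * p^i * (1-p)^(2*n+1-i)
          = ∑ i ∈ range (2*n+2),
            ((2*n+1).choose i : ℝ) * p^i * (1-p)^(2*n+1-i) := by
        rw [Finset.range_eq_Ico, ← Finset.Ico_add_one_right_eq_Icc,
          Finset.sum_Ico_consecutive _ (by omega) (by omega), ← Finset.range_eq_Ico]
        rfl
      rw [heq, hfull]
    have hrefl : ∑ i ∈ range (n+1),
        ((2*n+1).choose i : ℝ) * p^i * (1-p)^(2*n+1-i)
        = ∑ i ∈ Icc (n+1) (2*n+1),
        ((2*n+1).choose i : ℝ) * (1-p)^i * (1-(1-p))^(2*n+1-i) := by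
      rw [sub_sub_cancel]
      apply Finset.sum_nbij' (fun i => 2*n+1-i) (fun j => 2*n+1-j)
      · intro a ha
        simp only [mem_range] at ha
        simp only [mem_Icc]
        omega
      · intro b hb
        simp only [mem_Icc] at hb
        simp only [mem_range]
        omega
      · intro a ha
        simp only [mem_range] at ha
        omega
      · intro b hb
        simp only [mem_Icc] at hb
        omega
      · intro a ha
        simp only [mem_range] at ha
        have ha' : a ≤ 2*n+1 := by omega
        have hc : (2*n+1).choose (2*n+1-a) = (2*n+1).choose a :=
          Nat.choose_symm ha'
        have he : 2*n+1 - (2*n+1-a) = a := by omega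
        rw [hc, he]
        ring
    calc ∑ i ∈ Icc (n+1) (2*n+1), ((2*n+1).choose i : ℝ) * p^i * (1-p)^(2*n+1-i)
        = 1 - ∑ i ∈ range (n+1),
          ((2*n+1).choose i : ℝ) * p^i * (1-p)^(2*n+1-i) := by linarith
      _ = _ := by rw [hrefl]
  have h := tail_tendsto_zero (1-p) hq0 hq
  have h2 : Tendsto (fun n : ℕ => 1 - ∑ i ∈ Icc (n+1) (2*n+1),
      ((2*n+1).choose i : ℝ) * (1-p)^i * (1-(1-p))^(2*n+1-i)) atTop (nhds (1 - 0)) :=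
    tendsto_const_nhds.sub h
  rw [sub_zero] at h2
  exact h2.congr (fun n => (key n).symm)

/-- asymptotics of the multi-sensor loss, Section IV-B: for `θ ∈ (0,1/2)`,
`θ̂ = θ/(1-θ)` and odd `K = 2n+1`, let
`L^K_∞(θ) = ∑_{i=n+1}^{K} C(K,i) θ^i (1-θ)^{K-i} - (1/2) ∑_{i=n+1}^{K} C(K,i) θ̂^i (1-θ̂)^{K-i}`.
As `K → ∞` through odd values, `L^K_∞(θ) → 0` if `θ < 1/3` and `L^K_∞(θ) → -1/2` if
`1/3 < θ < 1/2`. -/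
theorem multi_sensor_loss_asymptotics (θ : ℝ) (hθ : θ ∈ Set.Ioo (0:ℝ) (1/2)) :
    (θ < 1/3 → Filter.Tendsto (fun n : ℕ =>
        (∑ i ∈ Finset.Icc (n + 1) (2 * n + 1),
            ((2 * n + 1).choose i : ℝ) * θ ^ i * (1 - θ) ^ (2 * n + 1 - i)) -
          (1/2) * ∑ i ∈ Finset.Icc (n + 1) (2 * n + 1),
            ((2 * n + 1).choose i : ℝ) * (θ / (1 - θ)) ^ i *
              (1 - θ / (1 - θ)) ^ (2 * n + 1 - i))
        Filter.atTop (nhds 0)) ∧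
    (1/3 < θ → Filter.Tendsto (fun n : ℕ =>
        (∑ i ∈ Finset.Icc (n + 1) (2 * n + 1),
            ((2 * n + 1).choose i : ℝ) * θ ^ i * (1 - θ) ^ (2 * n + 1 - i)) -
          (1/2) * ∑ i ∈ Finset.Icc (n + 1) (2 * n + 1),
            ((2 * n + 1).choose i : ℝ) * (θ / (1 - θ)) ^ i *
              (1 - θ / (1 - θ)) ^ (2 * n + 1 - i))
        Filter.atTop (nhds (-(1/2)))) := by
  obtain ⟨hθ0, hθ2⟩ := hθ
  have h1θ : (0:ℝ) < 1 - θ := by linarith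
  have h1 := tail_tendsto_zero θ hθ0 hθ2
  have hq0 : 0 < θ / (1 - θ) := div_pos hθ0 h1θ
  constructor
  · intro h13
    have hq : θ / (1 - θ) < 1/2 := by
      rw [div_lt_iff₀ h1θ]; linarith
    have h2 := tail_tendsto_zero (θ / (1 - θ)) hq0 hq
    have := h1.sub (h2.const_mul (1/2 : ℝ))
    simpa using this
  · intro h13
    have hq1 : θ / (1 - θ) < 1 := by
      rw [div_lt_one h1θ]; linarith
    have hq : 1/2 < θ / (1 - θ) := by
      rw [lt_div_iff₀ h1θ]; linarith
    have h2 := tail_tendsto_one (θ / (1 - θ)) hq hq1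
    have := h1.sub (h2.const_mul (1/2 : ℝ))
    simpa using this
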